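/- arXiv:0903.3976 — 4 statements merged into one kernel-verified Lean document; each statement's English description precedes it below -/
import Mathlib

section
/- Let m ≥ 1 be a natural number, let h : ℂ → ℂ be analytic at 0 with h(0) ≠ 0, and set η(x) = x^m·h(x). Let V be analytic at 0 and U(x) = (m−1)m/x² + V(x) for x ≠ 0 near 0. Then the Darboux-transformed potential Ũ(x) = U(x) − 2·(η'/η)'(x) satisfies: the function x ↦ Ũ(x) − m(m+1)/x², defined for x ≠ 0 near 0, extends to a function analytic at 0. In particular, the leading singularity of the potential increases from (m−1)m/x² to m(m+1)/x². -/
theorem analyticAt_deriv' {f : ℂ → ℂ} {x : ℂ} (hf : AnalyticAt ℂ f x) :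
    AnalyticAt ℂ (deriv f) x := by
  obtain ⟨s, hs, hso, hxs⟩ := mem_nhds_iff.mp hf.eventually_analyticAt
  exact (AnalyticOnNhd.deriv (fun y hy => hs hy)) x hxs

/-- Local mechanism of the Crum transformation at a pole: if `η(x) = x^m·h(x)` with
`h` analytic at `0`, `h(0) ≠ 0`, `m ≥ 1`, and `U(x) = (m−1)m/x² + V(x)` near `0`
(`V` analytic at `0`), then `Ũ = U − 2(η'/η)'` is such that `Ũ(x) − m(m+1)/x²`
extends to a function analytic at `0`. -/
theorem stmt_5 (m : ℕ) (hm : 1 ≤ m) (h V U : ℂ → ℂ)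
    (hh : AnalyticAt ℂ h 0) (hh0 : h 0 ≠ 0) (hV : AnalyticAt ℂ V 0)
    (hU : ∀ᶠ x in nhdsWithin (0 : ℂ) {0}ᶜ,
      U x = ((m : ℂ) - 1) * m / x ^ 2 + V x) :
    ∃ W : ℂ → ℂ, AnalyticAt ℂ W 0 ∧
      ∀ᶠ x in nhdsWithin (0 : ℂ) {0}ᶜ,
        (U x - 2 * deriv (fun y : ℂ =>
            deriv (fun s : ℂ => s ^ m * h s) y / (y ^ m * h y)) x)
          - (m : ℂ) * (m + 1) / x ^ 2 = W x := by
  obtain ⟨k, rfl⟩ : ∃ k, m = k + 1 := ⟨m - 1, (Nat.succ_pred_eq_of_pos hm).symm⟩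
  set q : ℂ → ℂ := fun y => deriv h y / h y with hq
  refine ⟨fun x => V x - 2 * deriv q x, ?_, ?_⟩
  · have h1 : AnalyticAt ℂ q 0 := (analyticAt_deriv' hh).div hh hh0
    exact hV.sub (analyticAt_const.mul (analyticAt_deriv' h1))
  · have hne : ∀ᶠ y in nhds (0:ℂ), h y ≠ 0 := hh.continuousAt.eventually_ne hh0
    have han : ∀ᶠ y in nhds (0:ℂ), AnalyticAt ℂ h y := hh.eventually_analyticAt
    obtain ⟨t, htsub, hto, ht0⟩ := mem_nhds_iff.mp (hne.and han)
    have htmem : ∀ᶠ x in nhdsWithin (0:ℂ) {0}ᶜ, x ∈ t :=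
      eventually_nhdsWithin_of_eventually_nhds (hto.eventually_mem ht0)
    filter_upwards [hU, htmem, self_mem_nhdsWithin] with x hUx hxt hx0
    have hx0 : x ≠ 0 := hx0
    -- deriv of the logarithmic derivative at x
    have hgq : (fun y : ℂ => deriv (fun s : ℂ => s ^ (k+1) * h s) y / (y ^ (k+1) * h y))
        =ᶠ[nhds x] (fun y : ℂ => ((k:ℂ)+1) * y⁻¹ + q y) := by
      have hmem : t ∩ {(0:ℂ)}ᶜ ∈ nhds x :=
        (hto.inter isOpen_compl_singleton).mem_nhds ⟨hxt, hx0⟩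
      filter_upwards [hmem] with y hy
      obtain ⟨hyt, hy0⟩ := hy
      have hy0 : y ≠ 0 := hy0
      have hdh : DifferentiableAt ℂ h y := (htsub hyt).2.differentiableAt
      have hhy : h y ≠ 0 := (htsub hyt).1
      rw [deriv_fun_mul (differentiableAt_pow _) hdh, deriv_pow_field, Nat.add_sub_cancel, Nat.cast_add_one]
      have : y ^ (k+1) = y ^ k * y := pow_succ y k
      rw [hq]
      field_simp [this]
      ring
    have hqx : DifferentiableAt ℂ q x := by
      have hax : AnalyticAt ℂ h x := (htsub hxt).2
      exact ((analyticAt_deriv' hax).div hax (htsub hxt).1).differentiableAt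
    have hderiv : deriv (fun y : ℂ =>
        deriv (fun s : ℂ => s ^ (k+1) * h s) y / (y ^ (k+1) * h y)) x
        = ((k:ℂ)+1) * (-(x^2)⁻¹) + deriv q x := by
      rw [hgq.deriv_eq, deriv_fun_add ((differentiableAt_const _).fun_mul
        (differentiableAt_inv hx0)) hqx, deriv_const_mul _ (differentiableAt_inv hx0),
        deriv_inv]
    rw [hderiv, hUx]
    have hx2 : (x:ℂ)^2 ≠ 0 := pow_ne_zero _ hx0
    push_cast
    field_simp
    ring
end

section
/- Let η ∈ ℂ with η³ = 1 and η ≠ 1, and let a, b ∈ ℂ with a ≠ 0, b ≠ 0 and a³ ≠ b³. Then the six numbers (a, aη, aη², b, bη, bη²) are pairwise distinct, and they satisfy the system a_j = 3·Σ_{p≠j} (a_j − a_p)^{−2} for every j ∈ {1,…,6} if and only if A = a³ and B = b³ satisfy the two equations A·(A−B)² = (A−B)² + 9A(A+2B) and B·(A−B)² = (A−B)² + 9B(B+2A). -/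
open Finset

private lemma keyA (η a b : ℂ) (hs : η^2 + η + 1 = 0) (ha : a ≠ 0) (hb : b ≠ 0)
    (hab : a^3 ≠ b^3) :
    (a = 3 * (((a - a*η)^2)⁻¹ + ((a - a*η^2)^2)⁻¹ + ((a - b)^2)⁻¹
        + ((a - b*η)^2)⁻¹ + ((a - b*η^2)^2)⁻¹))
    ↔ a^3*(a^3 - b^3)^2 = (a^3 - b^3)^2 + 9*a^3*(a^3 + 2*b^3) := by
  have hη3 : η^3 = 1 := by linear_combination (η - 1) * hs
  have hη1 : η ≠ 1 := fun h => by rw [h] at hs; norm_num at hs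
  have hη0 : η ≠ 0 := fun h => by rw [h] at hs; norm_num at hs
  have hη2 : η^2 ≠ 1 := by
    intro h
    have h2 : η = -2 := by linear_combination hs - h
    rw [h2] at h; norm_num at h
  have d1 : a - a*η ≠ 0 := by
    intro h
    exact hη1 (mul_left_cancel₀ ha (show a * 1 = a * η by linear_combination h)).symm
  have d2 : a - a*η^2 ≠ 0 := by
    intro h
    exact hη2 (mul_left_cancel₀ ha (show a * 1 = a * η^2 by linear_combination h)).symm
  have d3 : a - b ≠ 0 := by
    intro h; exact hab (by linear_combination (a^2 + a*b + b^2) * h)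
  have d4 : a - b*η ≠ 0 := by
    intro h; exact hab (by linear_combination (a^2 + a*b*η + b^2*η^2) * h + b^3*(η-1)*hs)
  have d5 : a - b*η^2 ≠ 0 := by
    intro h
    exact hab (by linear_combination (a^2 + a*b*η^2 + b^2*η^4) * h + b^3*(η-1)*(η^3+1)*hs)
  have hP : (a - b*η)*(a - b*η^2) = a^2 + a*b + b^2 := by
    linear_combination (b^2*(η-1) - a*b) * hs
  have h5 : a^2 + a*b + b^2 ≠ 0 := hP ▸ mul_ne_zero d4 d5
  have h5' : a * (a + b) + b ^ 2 ≠ 0 := by rw [show a * (a + b) + b ^ 2 = a^2 + a*b + b^2 by ring]; exact h5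
  have e1 : ((a - a*η)^2)⁻¹ + ((a - a*η^2)^2)⁻¹ = (3*a^2)⁻¹ := by
    field_simp
    linear_combination (5 - 9*η + 2*η^2 + 3*η^3 - η^4) * hs
  have e2 : ((a - b*η)^2)⁻¹ + ((a - b*η^2)^2)⁻¹
      = (2*a^2 + 2*a*b - b^2) / (a^2 + a*b + b^2)^2 := by
    field_simp
    linear_combination (-2*η^4*a^2*b^4 - 2*η^4*a*b^5 + η^4*b^6 + 4*η^3*a^3*b^3 + 6*η^3*a^2*b^4
      - η^3*b^6 - η^2*a^4*b^2 + 4*η^2*a^2*b^4 + 2*η^2*a*b^5 + η^2*b^6 - 7*η*a^4*b^2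
      - 12*η*a^3*b^3 - 6*η*a^2*b^4 - 2*η*a*b^5 + 2*a^5*b + 7*a^4*b^2 + 4*a^3*b^3
      + 2*a^2*b^4) * hs
  have hre : ((a - a*η)^2)⁻¹ + ((a - a*η^2)^2)⁻¹ + ((a - b)^2)⁻¹
        + ((a - b*η)^2)⁻¹ + ((a - b*η^2)^2)⁻¹
      = (3*a^2)⁻¹ + ((a - b)^2)⁻¹ + (2*a^2 + 2*a*b - b^2)/(a^2 + a*b + b^2)^2 := by
    rw [← e1, ← e2]; ring
  rw [hre]
  have hD : (3*a^2*(a-b)^2*(a^2+a*b+b^2)^2) ≠ 0 :=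
    mul_ne_zero (mul_ne_zero (mul_ne_zero (by norm_num) (pow_ne_zero 2 ha)) (pow_ne_zero 2 d3)) (pow_ne_zero 2 h5)
  constructor
  · intro h
    field_simp at h
    linear_combination h
  · intro h
    field_simp
    linear_combination h


private lemma v60 (x0 x1 x2 x3 x4 x5 : ℂ) : (![x0,x1,x2,x3,x4,x5] : Fin 6 → ℂ) 0 = x0 := rfl
private lemma v61 (x0 x1 x2 x3 x4 x5 : ℂ) : (![x0,x1,x2,x3,x4,x5] : Fin 6 → ℂ) 1 = x1 := rfl
private lemma v62 (x0 x1 x2 x3 x4 x5 : ℂ) : (![x0,x1,x2,x3,x4,x5] : Fin 6 → ℂ) 2 = x2 := rfl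
private lemma v63 (x0 x1 x2 x3 x4 x5 : ℂ) : (![x0,x1,x2,x3,x4,x5] : Fin 6 → ℂ) 3 = x3 := rfl
private lemma v64 (x0 x1 x2 x3 x4 x5 : ℂ) : (![x0,x1,x2,x3,x4,x5] : Fin 6 → ℂ) 4 = x4 := rfl
private lemma v65 (x0 x1 x2 x3 x4 x5 : ℂ) : (![x0,x1,x2,x3,x4,x5] : Fin 6 → ℂ) 5 = x5 := rfl
private lemma z20 : ((0:ℂ)^2)⁻¹ = 0 := by norm_num

set_option maxHeartbeats 1600000 in
/-- The `N = 6` (Lamé `n = 3`) two-orbit configuration: with `η` a primitive cube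
root of unity and `a, b ≠ 0`, `a³ ≠ b³`, the six numbers `(a, aη, aη², b, bη, bη²)`
are pairwise distinct, and they solve `a_j = 3·Σ_{p≠j}(a_j − a_p)^{−2}` iff
`A = a³`, `B = b³` satisfy `A(A−B)² = (A−B)² + 9A(A+2B)` and
`B(A−B)² = (A−B)² + 9B(B+2A)`. -/
theorem stmt_12 (η a b : ℂ) (hη3 : η ^ 3 = 1) (hη1 : η ≠ 1)
    (ha : a ≠ 0) (hb : b ≠ 0) (hab : a ^ 3 ≠ b ^ 3) :
    Function.Injective
      (![a, a * η, a * η ^ 2, b, b * η, b * η ^ 2] : Fin 6 → ℂ) ∧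
    ((∀ j : Fin 6,
        (![a, a * η, a * η ^ 2, b, b * η, b * η ^ 2] : Fin 6 → ℂ) j
          = 3 * ∑ p ∈ univ.erase j,
              (((![a, a * η, a * η ^ 2, b, b * η, b * η ^ 2] : Fin 6 → ℂ) j
                - (![a, a * η, a * η ^ 2, b, b * η, b * η ^ 2] : Fin 6 → ℂ) p)
                ^ 2)⁻¹)
      ↔ (a ^ 3 * (a ^ 3 - b ^ 3) ^ 2
            = (a ^ 3 - b ^ 3) ^ 2 + 9 * a ^ 3 * (a ^ 3 + 2 * b ^ 3) ∧
         b ^ 3 * (a ^ 3 - b ^ 3) ^ 2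
            = (a ^ 3 - b ^ 3) ^ 2 + 9 * b ^ 3 * (b ^ 3 + 2 * a ^ 3))) := by
  have hs : η^2 + η + 1 = 0 := by
    rcases mul_eq_zero.1 (show (η - 1) * (η^2 + η + 1) = 0 by linear_combination hη3) with h | h
    · exact absurd (by linear_combination h) hη1
    · exact h
  have hη0 : η ≠ 0 := fun h => by rw [h] at hs; norm_num at hs
  have hη2 : η^2 ≠ 1 := by
    intro h
    have h2 : η = -2 := by linear_combination hs - h
    rw [h2] at h; norm_num at h
  -- pairwise distinctness facts
  have n01a : a ≠ a*η := by
    intro h; exact hη1 (mul_left_cancel₀ ha (show a * 1 = a * η by linear_combination h)).symm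
  have n02a : a ≠ a*η^2 := by
    intro h; exact hη2 (mul_left_cancel₀ ha (show a * 1 = a * η^2 by linear_combination h)).symm
  have n12a : a*η ≠ a*η^2 := by
    intro h
    have h2 : η = η^2 := mul_left_cancel₀ ha (by linear_combination h)
    exact hη1 (mul_left_cancel₀ hη0 (show η * 1 = η * η by linear_combination h2)).symm
  have n01b : b ≠ b*η := by
    intro h; exact hη1 (mul_left_cancel₀ hb (show b * 1 = b * η by linear_combination h)).symm
  have n02b : b ≠ b*η^2 := by
    intro h; exact hη2 (mul_left_cancel₀ hb (show b * 1 = b * η^2 by linear_combination h)).symm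
  have n12b : b*η ≠ b*η^2 := by
    intro h
    have h2 : η = η^2 := mul_left_cancel₀ hb (by linear_combination h)
    exact hη1 (mul_left_cancel₀ hη0 (show η * 1 = η * η by linear_combination h2)).symm
  have m00 : a ≠ b := fun h => hab (by linear_combination (a^2 + a*b + b^2) * h)
  have m01 : a ≠ b*η := fun h => hab (by
    linear_combination (a^2 + a*b*η + b^2*η^2) * h + b^3*(η-1)*hs)
  have m02 : a ≠ b*η^2 := fun h => hab (by
    linear_combination (a^2 + a*b*η^2 + b^2*η^4) * h + b^3*(η-1)*(η^3+1)*hs)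
  have m10 : a*η ≠ b := fun h => hab (by
    linear_combination (a^2*η^2 + a*b*η + b^2) * h - a^3*(η-1)*hs)
  have m11 : a*η ≠ b*η := fun h => hab (by
    linear_combination (η^2*(a^2 + a*b + b^2)) * h - (a^3-b^3)*(η-1)*hs)
  have m12 : a*η ≠ b*η^2 := fun h => hab (by
    linear_combination (a^2*η^2 + a*b*η^3 + b^2*η^4) * h + (η-1)*(b^3*(η^3+1) - a^3)*hs)
  have m20 : a*η^2 ≠ b := fun h => hab (by
    linear_combination (a^2*η^4 + a*b*η^2 + b^2) * h - a^3*(η-1)*(η^3+1)*hs)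
  have m21 : a*η^2 ≠ b*η := fun h => hab (by
    linear_combination (a^2*η^4 + a*b*η^3 + b^2*η^2) * h + (η-1)*(b^3 - a^3*(η^3+1))*hs)
  have m22 : a*η^2 ≠ b*η^2 := fun h => hab (by
    linear_combination (η^4*(a^2 + a*b + b^2)) * h - (a^3-b^3)*(η-1)*(η^3+1)*hs)
  constructor
  · -- injectivity
    intro j k hjk
    fin_cases j <;> fin_cases k <;>
      first
      | rfl
      | exact absurd hjk n01a | exact absurd hjk n02a | exact absurd hjk n12a
      | exact absurd hjk n01b | exact absurd hjk n02b | exact absurd hjk n12b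
      | exact absurd hjk m00 | exact absurd hjk m01 | exact absurd hjk m02
      | exact absurd hjk m10 | exact absurd hjk m11 | exact absurd hjk m12
      | exact absurd hjk m20 | exact absurd hjk m21 | exact absurd hjk m22
      | exact absurd hjk n01a.symm | exact absurd hjk n02a.symm | exact absurd hjk n12a.symm
      | exact absurd hjk n01b.symm | exact absurd hjk n02b.symm | exact absurd hjk n12b.symm
      | exact absurd hjk m00.symm | exact absurd hjk m01.symm | exact absurd hjk m02.symm
      | exact absurd hjk m10.symm | exact absurd hjk m11.symm | exact absurd hjk m12.symm
      | exact absurd hjk m20.symm | exact absurd hjk m21.symm | exact absurd hjk m22.symm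
  · -- the system ↔ the two algebraic equations
    have E0 := keyA η a b hs ha hb hab
    have E1 := keyA η (a*η) b hs (mul_ne_zero ha hη0) hb
      (by rw [mul_pow, hη3, mul_one]; exact hab)
    rw [show a*η*η = a*η^2 by ring, show a*η*η^2 = a by linear_combination a*hη3,
      mul_pow, hη3, mul_one] at E1
    have E2 := keyA η (a*η^2) b hs (mul_ne_zero ha (pow_ne_zero 2 hη0)) hb
      (by rw [show (a*η^2)^3 = a^3 by linear_combination a^3*(η^3+1)*hη3]; exact hab)
    rw [show a*η^2*η = a by linear_combination a*hη3,
      show a*η^2*η^2 = a*η by linear_combination a*η*hη3,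
      show (a*η^2)^3 = a^3 by linear_combination a^3*(η^3+1)*hη3] at E2
    have E3 := (keyA η b a hs hb ha hab.symm).trans
      (show _ ↔ (b^3*(a^3-b^3)^2 = (a^3-b^3)^2 + 9*b^3*(b^3+2*a^3)) by
        constructor <;> intro h <;> linear_combination h)
    have E4 := (keyA η (b*η) a hs (mul_ne_zero hb hη0) ha
      (by rw [mul_pow, hη3, mul_one]; exact hab.symm)).trans
      (show _ ↔ (b^3*(a^3-b^3)^2 = (a^3-b^3)^2 + 9*b^3*(b^3+2*a^3)) by
        rw [mul_pow, hη3, mul_one]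
        constructor <;> intro h <;> linear_combination h)
    rw [show b*η*η = b*η^2 by ring, show b*η*η^2 = b by linear_combination b*hη3] at E4
    have E5 := (keyA η (b*η^2) a hs (mul_ne_zero hb (pow_ne_zero 2 hη0)) ha
      (by rw [show (b*η^2)^3 = b^3 by linear_combination b^3*(η^3+1)*hη3]; exact hab.symm)).trans
      (show _ ↔ (b^3*(a^3-b^3)^2 = (a^3-b^3)^2 + 9*b^3*(b^3+2*a^3)) by
        rw [show (b*η^2)^3 = b^3 by linear_combination b^3*(η^3+1)*hη3]
        constructor <;> intro h <;> linear_combination h)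
    rw [show b*η^2*η = b by linear_combination b*hη3,
      show b*η^2*η^2 = b*η by linear_combination b*η*hη3] at E5
    set f : Fin 6 → ℂ := ![a, a * η, a * η ^ 2, b, b * η, b * η ^ 2] with hf
    have red : ∀ i : Fin 6, (f i = 3 * ∑ p ∈ univ.erase i, ((f i - f p)^2)⁻¹)
        ↔ (f i = 3 * (((f i - f 0)^2)⁻¹ + ((f i - f 1)^2)⁻¹ + ((f i - f 2)^2)⁻¹
            + ((f i - f 3)^2)⁻¹ + ((f i - f 4)^2)⁻¹ + ((f i - f 5)^2)⁻¹)) := by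
      intro i
      rw [Finset.sum_erase _ (by simp), Fin.sum_univ_six]
    have R0 : (f 0 = 3 * ∑ p ∈ univ.erase 0, ((f 0 - f p)^2)⁻¹)
        ↔ a^3*(a^3 - b^3)^2 = (a^3 - b^3)^2 + 9*a^3*(a^3 + 2*b^3) := by
      rw [red 0]
      simp only [hf, v60, v61, v62, v63, v64, v65, sub_self, z20, zero_add, add_zero]
      exact E0
    have R1 : (f 1 = 3 * ∑ p ∈ univ.erase 1, ((f 1 - f p)^2)⁻¹)
        ↔ a^3*(a^3 - b^3)^2 = (a^3 - b^3)^2 + 9*a^3*(a^3 + 2*b^3) := by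
      rw [red 1]
      simp only [hf, v60, v61, v62, v63, v64, v65, sub_self, z20, zero_add, add_zero]
      constructor
      · intro h; exact E1.mp (by linear_combination h)
      · intro h; linear_combination E1.mpr h
    have R2 : (f 2 = 3 * ∑ p ∈ univ.erase 2, ((f 2 - f p)^2)⁻¹)
        ↔ a^3*(a^3 - b^3)^2 = (a^3 - b^3)^2 + 9*a^3*(a^3 + 2*b^3) := by
      rw [red 2]
      simp only [hf, v60, v61, v62, v63, v64, v65, sub_self, z20, zero_add, add_zero]
      exact E2
    have R3 : (f 3 = 3 * ∑ p ∈ univ.erase 3, ((f 3 - f p)^2)⁻¹)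
        ↔ b^3*(a^3 - b^3)^2 = (a^3 - b^3)^2 + 9*b^3*(b^3 + 2*a^3) := by
      rw [red 3]
      simp only [hf, v60, v61, v62, v63, v64, v65, sub_self, z20, zero_add, add_zero]
      constructor
      · intro h; exact E3.mp (by linear_combination h)
      · intro h; linear_combination E3.mpr h
    have R4 : (f 4 = 3 * ∑ p ∈ univ.erase 4, ((f 4 - f p)^2)⁻¹)
        ↔ b^3*(a^3 - b^3)^2 = (a^3 - b^3)^2 + 9*b^3*(b^3 + 2*a^3) := by
      rw [red 4]
      simp only [hf, v60, v61, v62, v63, v64, v65, sub_self, z20, zero_add, add_zero]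
      constructor
      · intro h; exact E4.mp (by linear_combination h)
      · intro h; linear_combination E4.mpr h
    have R5 : (f 5 = 3 * ∑ p ∈ univ.erase 5, ((f 5 - f p)^2)⁻¹)
        ↔ b^3*(a^3 - b^3)^2 = (a^3 - b^3)^2 + 9*b^3*(b^3 + 2*a^3) := by
      rw [red 5]
      simp only [hf, v60, v61, v62, v63, v64, v65, sub_self, z20, zero_add, add_zero]
      constructor
      · intro h; exact E5.mp (by linear_combination h)
      · intro h; linear_combination E5.mpr h
    constructor
    · intro H
      exact ⟨R0.mp (H 0), R3.mp (H 3)⟩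
    · rintro ⟨hA, hB⟩ j
      fin_cases j
      · exact R0.mpr hA
      · exact R1.mpr hA
      · exact R2.mpr hA
      · exact R3.mpr hB
      · exact R4.mpr hB
      · exact R5.mpr hB
end

section
/- Let A, B ∈ ℂ with A ≠ B, and suppose A·(A−B)² = (A−B)² + 9A(A+2B) and B·(A−B)² = (A−B)² + 9B(B+2A). Then A + B = 5, A·B = −5, A² + 7AB + B² = 0, B ≠ 0, and w = A/B satisfies w² + 7w + 1 = 0 (so w = (−7 ± √45)/2). -/
/-- Reduction of the two-orbit system in the variables `A = a³`, `B = b³`: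
the equations `A(A−B)² = (A−B)² + 9A(A+2B)`, `B(A−B)² = (A−B)² + 9B(B+2A)` with
`A ≠ B` force `A + B = 5`, `AB = −5`, `A² + 7AB + B² = 0`, `B ≠ 0`, and
`w = A/B` satisfies `w² + 7w + 1 = 0`, i.e. `w = (−7 ± √45)/2`. -/
theorem stmt_13 (A B : ℂ) (hAB : A ≠ B)
    (h1 : A * (A - B) ^ 2 = (A - B) ^ 2 + 9 * A * (A + 2 * B))
    (h2 : B * (A - B) ^ 2 = (A - B) ^ 2 + 9 * B * (B + 2 * A)) :
    A + B = 5 ∧ A * B = -5 ∧ A ^ 2 + 7 * A * B + B ^ 2 = 0 ∧ B ≠ 0 ∧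
      (A / B) ^ 2 + 7 * (A / B) + 1 = 0 ∧
      (A / B = (-7 + (Real.sqrt 45 : ℂ)) / 2 ∨
       A / B = (-7 - (Real.sqrt 45 : ℂ)) / 2) := by
  have hd : A - B ≠ 0 := sub_ne_zero.mpr hAB
  have h3 : (A - B) * (A - B) ^ 2 = (A - B) * (9 * (A + B)) := by
    linear_combination h1 - h2
  have h4 : (A - B) ^ 2 = 9 * (A + B) := mul_left_cancel₀ hd h3
  have h5 : A * B = -(A + B) := by
    linear_combination -(h1 / 18) - (h2 / 18) + ((A + B - 2) / 18) * h4
  have hne : A + B ≠ 0 := by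
    intro h
    have : (A - B) ^ 2 = 0 := by rw [h4, h]; ring
    exact hd (pow_eq_zero_iff (by norm_num) |>.mp this)
  have hS2 : (A + B) * (A + B) = 5 * (A + B) := by
    linear_combination h4 + 4 * h5
  have hsum : A + B = 5 := mul_right_cancel₀ hne hS2
  have hprod : A * B = -5 := by linear_combination h5 - hsum
  have hq : A ^ 2 + 7 * A * B + B ^ 2 = 0 := by
    linear_combination (A + B + 5) * hsum + 5 * hprod
  have hB : B ≠ 0 := by
    intro h
    rw [h, mul_zero] at hprod
    norm_num at hprod
  have hw : (A / B) ^ 2 + 7 * (A / B) + 1 = 0 := by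
    field_simp
    linear_combination hq
  have hs : ((Real.sqrt 45 : ℂ)) ^ 2 = 45 := by
    norm_cast
    rw [Real.sq_sqrt (by norm_num : (45:ℝ) ≥ 0)]
  have hfac : (A / B - (-7 + (Real.sqrt 45 : ℂ)) / 2) *
      (A / B - (-7 - (Real.sqrt 45 : ℂ)) / 2) = 0 := by
    linear_combination hw - hs / 4
  refine ⟨hsum, hprod, hq, hB, hw, ?_⟩
  rcases mul_eq_zero.mp hfac with h | h
  · exact Or.inl (sub_eq_zero.mp h)
  · exact Or.inr (sub_eq_zero.mp h)
end

section
/- Let I ⊆ ℝ be an open interval, N ≥ 1, and let x₁, …, x_N : I → ℂ be differentiable functions whose values are pairwise distinct at every t ∈ I (j ≠ p implies x_j(t) ≠ x_p(t)). Define u(t, x) = Σ_{j=1}^{N} 2·(x − x_j(t))^{−2} for x ∈ ℂ with x ≠ x_j(t) for all j. Suppose that for every t ∈ I and every such x, the function t ↦ u(t,x) is differentiable at t and its derivative equals 6·u(t,x)·u_x(t,x) − u_{xxx}(t,x), where u_x and u_{xxx} denote the first and third complex derivatives of x ↦ u(t,x). Then for every t ∈ I and every j: (1) x_j'(t) = −12·Σ_{p≠j}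 (x_j(t) − x_p(t))^{−2}, and (2) Σ_{p≠j} (x_j(t) − x_p(t))^{−3} = 0. -/
open Finset

lemma hasDerivAt_inv_pow_aux (c x : ℂ) (hx : x ≠ c) (m : ℕ) (hm : 1 ≤ m) :
    HasDerivAt (fun y => ((y - c) ^ m)⁻¹) (-(m : ℂ) * ((x - c) ^ (m + 1))⁻¹) x := by
  have hxc : x - c ≠ 0 := sub_ne_zero.2 hx
  have h1 : HasDerivAt (fun y : ℂ => (y - c) ^ m) ((m : ℂ) * (x - c) ^ (m - 1) * 1) x :=
    (((hasDerivAt_id x)).sub_const c).pow m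
  have h2 := h1.inv (pow_ne_zero m hxc)
  refine h2.congr_deriv ?_
  rw [mul_one]
  field_simp
  rw [← pow_mul, mul_assoc, ← pow_add]
  have h3 : m * 2 = (m - 1) + (m + 1) := by omega
  rw [h3]

/-- The rational KdV ansatz: `u(t,x) = Σ_j 2(x − x_j(t))^{−2}`. -/
noncomputable def kdvU (N : ℕ) (X : Fin N → ℝ → ℂ) (t : ℝ) (x : ℂ) : ℂ :=
  ∑ j : Fin N, 2 * ((x - X j t) ^ 2)⁻¹

/-- If `u(t,x) = Σ_j 2(x − x_j(t))^{−2}` (with differentiable, pairwise distinct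
poles `x_j(t)`) satisfies the KdV equation `u_t = 6uu_x − u_{xxx}` away from the
poles, then the poles move by `x_j' = −12·Σ_{p≠j}(x_j − x_p)^{−2}` and satisfy the
locus constraint `Σ_{p≠j}(x_j − x_p)^{−3} = 0`. -/
theorem stmt_14 (I : Set ℝ) (hIopen : IsOpen I) (hIconn : I.OrdConnected)
    (N : ℕ) (hN : 1 ≤ N) (X : Fin N → ℝ → ℂ)
    (hdiff : ∀ j : Fin N, ∀ t ∈ I, DifferentiableAt ℝ (X j) t)
    (hdist : ∀ t ∈ I, ∀ j p : Fin N, j ≠ p → X j t ≠ X p t)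
    (hKdV : ∀ t ∈ I, ∀ x : ℂ, (∀ j : Fin N, x ≠ X j t) →
      HasDerivAt (fun s : ℝ => kdvU N X s x)
        (6 * kdvU N X t x * deriv (kdvU N X t) x
          - deriv (deriv (deriv (kdvU N X t))) x) t) :
    ∀ t ∈ I, ∀ j : Fin N,
      (deriv (X j) t = -12 * ∑ p ∈ univ.erase j, ((X j t - X p t) ^ 2)⁻¹) ∧
      (∑ p ∈ univ.erase j, ((X j t - X p t) ^ 3)⁻¹ = 0) := by
  intro t ht j
  set S : Set ℂ := {x | ∀ p : Fin N, x ≠ X p t} with hSdef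
  have hSopen : IsOpen S := by
    have : S = ⋂ p : Fin N, {x : ℂ | x ≠ X p t} := by
      ext x; simp [hSdef, Set.mem_iInter]
    rw [this]; exact isOpen_iInter_of_finite fun p => isOpen_ne
  have hne : ∀ x ∈ S, ∀ p : Fin N, x - X p t ≠ 0 := fun x hx p => sub_ne_zero.2 (hx p)
  -- explicit spatial derivatives
  set u1 : ℂ → ℂ := fun x => ∑ p : Fin N, (-4 : ℂ) * ((x - X p t) ^ 3)⁻¹ with hu1def
  set u2 : ℂ → ℂ := fun x => ∑ p : Fin N, (12 : ℂ) * ((x - X p t) ^ 4)⁻¹ with hu2def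
  set u3 : ℂ → ℂ := fun x => ∑ p : Fin N, (-48 : ℂ) * ((x - X p t) ^ 5)⁻¹ with hu3def
  have hd0 : ∀ x ∈ S, HasDerivAt (kdvU N X t) (u1 x) x := by
    intro x hx
    have h := HasDerivAt.fun_sum (u := (univ : Finset (Fin N))) fun p _ =>
      ((hasDerivAt_inv_pow_aux (X p t) x (hx p) 2 one_le_two).const_mul (2 : ℂ))
    have e : u1 x = ∑ p : Fin N, (2 : ℂ) * (-((2 : ℕ) : ℂ) * ((x - X p t) ^ (2 + 1))⁻¹) := by
      simp only [hu1def]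
      refine sum_congr rfl fun p _ => ?_
      push_cast; ring
    rw [e]; exact h
  have hd1 : ∀ x ∈ S, HasDerivAt u1 (u2 x) x := by
    intro x hx
    have h := HasDerivAt.fun_sum (u := (univ : Finset (Fin N))) fun p _ =>
      ((hasDerivAt_inv_pow_aux (X p t) x (hx p) 3 (by norm_num)).const_mul ((-4 : ℂ)))
    have e : u2 x = ∑ p : Fin N, (-4 : ℂ) * (-((3 : ℕ) : ℂ) * ((x - X p t) ^ (3 + 1))⁻¹) := by
      simp only [hu2def]
      refine sum_congr rfl fun p _ => ?_
      push_cast; ring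
    rw [e]; exact h
  have hd2 : ∀ x ∈ S, HasDerivAt u2 (u3 x) x := by
    intro x hx
    have h := HasDerivAt.fun_sum (u := (univ : Finset (Fin N))) fun p _ =>
      ((hasDerivAt_inv_pow_aux (X p t) x (hx p) 4 (by norm_num)).const_mul ((12 : ℂ)))
    have e : u3 x = ∑ p : Fin N, (12 : ℂ) * (-((4 : ℕ) : ℂ) * ((x - X p t) ^ (4 + 1))⁻¹) := by
      simp only [hu3def]
      refine sum_congr rfl fun p _ => ?_
      push_cast; ring
    rw [e]; exact h
  have hder1 : ∀ x ∈ S, deriv (kdvU N X t) x = u1 x := fun x hx => (hd0 x hx).deriv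
  have hder2 : ∀ x ∈ S, deriv (deriv (kdvU N X t)) x = u2 x := by
    intro x hx
    have hev : deriv (kdvU N X t) =ᶠ[nhds x] u1 :=
      Filter.eventuallyEq_of_mem (hSopen.mem_nhds hx) hder1
    rw [hev.deriv_eq, (hd1 x hx).deriv]
  have hder3 : ∀ x ∈ S, deriv (deriv (deriv (kdvU N X t))) x = u3 x := by
    intro x hx
    have hev : deriv (deriv (kdvU N X t)) =ᶠ[nhds x] u2 :=
      Filter.eventuallyEq_of_mem (hSopen.mem_nhds hx) hder2
    rw [hev.deriv_eq, (hd2 x hx).deriv]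
  -- time derivative and the pointwise rational identity
  have hE1 : ∀ x ∈ S,
      (∑ p : Fin N, 4 * deriv (X p) t * (x - X p t) * (((x - X p t) ^ 2) ^ 2)⁻¹)
        = 6 * kdvU N X t x * u1 x - u3 x := by
    intro x hx
    have hterm : ∀ p : Fin N, HasDerivAt (fun s : ℝ => 2 * ((x - X p s) ^ 2)⁻¹)
        (4 * deriv (X p) t * (x - X p t) * (((x - X p t) ^ 2) ^ 2)⁻¹) t := by
      intro p
      have hsub : HasDerivAt (fun s : ℝ => x - X p s) (-(deriv (X p) t)) t :=
        ((hdiff p t ht).hasDerivAt).const_sub x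
      have hsq : HasDerivAt (fun s : ℝ => (x - X p s) ^ 2)
          (-(deriv (X p) t) * (x - X p t) + (x - X p t) * -(deriv (X p) t)) t := by
        have h2 := hsub.mul hsub
        simp only [← pow_two] at h2
        exact h2
      have hinv := HasDerivAt.scomp (𝕜 := ℝ) t
        (hasDerivAt_inv (x := (x - X p t) ^ 2) (pow_ne_zero 2 (hne x hx p))) hsq
      have h3 := hinv.const_mul (2 : ℂ)
      refine h3.congr_deriv ?_
      rw [smul_eq_mul]
      ring
    have h := HasDerivAt.fun_sum (u := (univ : Finset (Fin N))) (fun p _ => hterm p)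
    have hu := h.unique (hKdV t ht x hx)
    rw [hder1 x hx, hder3 x hx] at hu
    exact hu
  -- rearrange the right-hand side into an off-diagonal double sum
  have hE2 : ∀ x ∈ S, 6 * kdvU N X t x * u1 x - u3 x
      = -(48 : ℂ) * ∑ p : Fin N, ∑ k ∈ univ.erase p,
          ((x - X p t) ^ 2)⁻¹ * ((x - X k t) ^ 3)⁻¹ := by
    intro x hx
    simp only [hu1def, hu3def, kdvU]
    rw [mul_assoc, Finset.sum_mul_sum, Finset.mul_sum, ← Finset.sum_sub_distrib,
      Finset.mul_sum]
    refine sum_congr rfl fun p _ => ?_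
    rw [← Finset.add_sum_erase univ
      (fun k => 2 * ((x - X p t) ^ 2)⁻¹ * (-4 * ((x - X k t) ^ 3)⁻¹)) (mem_univ p)]
    have hsum : (6 : ℂ) * ∑ k ∈ univ.erase p,
          2 * ((x - X p t) ^ 2)⁻¹ * (-4 * ((x - X k t) ^ 3)⁻¹)
        = -48 * ∑ k ∈ univ.erase p, ((x - X p t) ^ 2)⁻¹ * ((x - X k t) ^ 3)⁻¹ := by
      rw [Finset.mul_sum, Finset.mul_sum]
      exact sum_congr rfl fun k _ => by ring
    have hdiag : (6 : ℂ) * (2 * ((x - X p t) ^ 2)⁻¹ * (-4 * ((x - X p t) ^ 3)⁻¹))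
        + 48 * ((x - X p t) ^ 5)⁻¹ = 0 := by
      have h5 : ((x - X p t) ^ 2)⁻¹ * ((x - X p t) ^ 3)⁻¹ = ((x - X p t) ^ 5)⁻¹ := by
        rw [← mul_inv, ← pow_add]
      rw [← h5]; ring
    linear_combination hsum + hdiag
  have hE3 : ∀ x ∈ S,
      (∑ p : Fin N, 4 * deriv (X p) t * (x - X p t) * (((x - X p t) ^ 2) ^ 2)⁻¹)
        + 48 * ∑ p : Fin N, ∑ k ∈ univ.erase p,
            ((x - X p t) ^ 2)⁻¹ * ((x - X k t) ^ 3)⁻¹ = 0 := by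
    intro x hx
    rw [hE1 x hx, hE2 x hx]; ring
  -- the analytic extension of `(x - x_j)^3 ⬝ (u_t - 6uu_x + u_{xxx})` near `x_j`
  set G : ℂ → ℂ := fun x =>
    4 * deriv (X j) t
    + (∑ p ∈ univ.erase j, 4 * deriv (X p) t * ((x - X p t) ^ 3)⁻¹ * (x - X j t) ^ 3)
    + 48 * (∑ k ∈ univ.erase j, ((x - X k t) ^ 3)⁻¹ * (x - X j t))
    + 48 * (∑ p ∈ univ.erase j, ((x - X p t) ^ 2)⁻¹)
    + 48 * (∑ p ∈ univ.erase j, ∑ k ∈ (univ.erase j).erase p,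
        (x - X j t) ^ 3 * (((x - X p t) ^ 2)⁻¹ * ((x - X k t) ^ 3)⁻¹)) with hGdef
  have hG0 : ∀ x ∈ S, G x = 0 := by
    intro x hx
    have hxj := hne x hx j
    have e1 : (x - X j t) ^ 3 *
        (∑ p : Fin N, 4 * deriv (X p) t * (x - X p t) * (((x - X p t) ^ 2) ^ 2)⁻¹)
        = 4 * deriv (X j) t
          + ∑ p ∈ univ.erase j, 4 * deriv (X p) t * ((x - X p t) ^ 3)⁻¹ * (x - X j t) ^ 3 := by
      rw [← Finset.add_sum_erase univ
        (fun p => 4 * deriv (X p) t * (x - X p t) * (((x - X p t) ^ 2) ^ 2)⁻¹) (mem_univ j),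
        mul_add, Finset.mul_sum]
      congr 1
      · field_simp
      · exact sum_congr rfl fun p hp => by
          have h := hne x hx p
          field_simp
    have qA : (x - X j t) ^ 3 * (48 * ∑ k ∈ univ.erase j,
          ((x - X j t) ^ 2)⁻¹ * ((x - X k t) ^ 3)⁻¹)
        = 48 * ∑ k ∈ univ.erase j, ((x - X k t) ^ 3)⁻¹ * (x - X j t) := by
      rw [Finset.mul_sum, Finset.mul_sum, Finset.mul_sum]
      exact sum_congr rfl fun k hk => by
        have h := hne x hx k
        field_simp
    have qB : (x - X j t) ^ 3 * (48 * ∑ p ∈ univ.erase j,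
          ((x - X p t) ^ 2)⁻¹ * ((x - X j t) ^ 3)⁻¹)
        = 48 * ∑ p ∈ univ.erase j, ((x - X p t) ^ 2)⁻¹ := by
      rw [Finset.mul_sum, Finset.mul_sum, Finset.mul_sum]
      exact sum_congr rfl fun p hp => by
        have h := hne x hx p
        field_simp
    have qC : (x - X j t) ^ 3 * (48 * ∑ p ∈ univ.erase j, ∑ k ∈ (univ.erase j).erase p,
          ((x - X p t) ^ 2)⁻¹ * ((x - X k t) ^ 3)⁻¹)
        = 48 * ∑ p ∈ univ.erase j, ∑ k ∈ (univ.erase j).erase p,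
          (x - X j t) ^ 3 * (((x - X p t) ^ 2)⁻¹ * ((x - X k t) ^ 3)⁻¹) := by
      rw [Finset.mul_sum, Finset.mul_sum, Finset.mul_sum]
      refine sum_congr rfl fun p hp => ?_
      rw [Finset.mul_sum, Finset.mul_sum, Finset.mul_sum]
      exact sum_congr rfl fun k hk => by ring
    have inner : ∀ p ∈ univ.erase j,
        (∑ k ∈ univ.erase p, ((x - X p t) ^ 2)⁻¹ * ((x - X k t) ^ 3)⁻¹)
        = ((x - X p t) ^ 2)⁻¹ * ((x - X j t) ^ 3)⁻¹
          + ∑ k ∈ (univ.erase j).erase p, ((x - X p t) ^ 2)⁻¹ * ((x - X k t) ^ 3)⁻¹ := by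
      intro p hp
      have hpj : p ≠ j := (mem_erase.1 hp).1
      rw [← Finset.add_sum_erase (univ.erase p)
        (fun k => ((x - X p t) ^ 2)⁻¹ * ((x - X k t) ^ 3)⁻¹)
        (mem_erase.2 ⟨hpj.symm, mem_univ j⟩), Finset.erase_right_comm]
    have e2 : (x - X j t) ^ 3 * (48 * ∑ p : Fin N, ∑ k ∈ univ.erase p,
          ((x - X p t) ^ 2)⁻¹ * ((x - X k t) ^ 3)⁻¹)
        = 48 * (∑ k ∈ univ.erase j, ((x - X k t) ^ 3)⁻¹ * (x - X j t))
          + 48 * (∑ p ∈ univ.erase j, ((x - X p t) ^ 2)⁻¹)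
          + 48 * (∑ p ∈ univ.erase j, ∑ k ∈ (univ.erase j).erase p,
              (x - X j t) ^ 3 * (((x - X p t) ^ 2)⁻¹ * ((x - X k t) ^ 3)⁻¹)) := by
      rw [← Finset.add_sum_erase univ
        (fun p => ∑ k ∈ univ.erase p, ((x - X p t) ^ 2)⁻¹ * ((x - X k t) ^ 3)⁻¹)
        (mem_univ j), sum_congr rfl inner, Finset.sum_add_distrib]
      linear_combination qA + qB + qC
    have key : G x = (x - X j t) ^ 3 *
        ((∑ p : Fin N, 4 * deriv (X p) t * (x - X p t) * (((x - X p t) ^ 2) ^ 2)⁻¹)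
          + 48 * ∑ p : Fin N, ∑ k ∈ univ.erase p,
              ((x - X p t) ^ 2)⁻¹ * ((x - X k t) ^ 3)⁻¹) := by
      simp only [hGdef]
      linear_combination -e1 - e2
    rw [key, hE3 x hx, mul_zero]
  -- distinctness of the other poles from `X j t`
  have hjp : ∀ p : Fin N, p ≠ j → X j t ≠ X p t := fun p hp => hdist t ht j p hp.symm
  -- derivative of `G` at the pole `X j t`
  have hcube : HasDerivAt (fun x : ℂ => (x - X j t) ^ 3)
      (((3 : ℕ) : ℂ) * (X j t - X j t) ^ (3 - 1) * 1) (X j t) :=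
    ((hasDerivAt_id (X j t)).sub_const (X j t)).pow 3
  have hT1 : HasDerivAt (fun x : ℂ => ∑ p ∈ univ.erase j,
      4 * deriv (X p) t * ((x - X p t) ^ 3)⁻¹ * (x - X j t) ^ 3) 0 (X j t) := by
    have h := HasDerivAt.fun_sum (u := univ.erase j)
      (A := fun p x => 4 * deriv (X p) t * ((x - X p t) ^ 3)⁻¹ * (x - X j t) ^ 3)
      (A' := fun _ => 0) (fun p hp => by
        have hp' : p ≠ j := (mem_erase.1 hp).1
        have h1 := (hasDerivAt_inv_pow_aux (X p t) (X j t) (hjp p hp') 3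
          (by norm_num)).const_mul (4 * deriv (X p) t)
        have h3 := h1.mul hcube
        refine h3.congr_deriv ?_
        simp)
    simpa using h
  have hT2 : HasDerivAt (fun x : ℂ => 48 * ∑ k ∈ univ.erase j,
      ((x - X k t) ^ 3)⁻¹ * (x - X j t))
      (48 * ∑ k ∈ univ.erase j, ((X j t - X k t) ^ 3)⁻¹) (X j t) := by
    refine HasDerivAt.const_mul 48 ?_
    refine HasDerivAt.fun_sum (fun k hk => ?_)
    have hk' : k ≠ j := (mem_erase.1 hk).1
    have h1 := hasDerivAt_inv_pow_aux (X k t) (X j t) (hjp k hk') 3 (by norm_num)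
    have h2 := (hasDerivAt_id (X j t)).sub_const (X j t)
    have h3 := h1.mul h2
    refine h3.congr_deriv ?_
    simp
  have hT3 : HasDerivAt (fun x : ℂ => 48 * ∑ p ∈ univ.erase j, ((x - X p t) ^ 2)⁻¹)
      (48 * ∑ p ∈ univ.erase j, (-2 : ℂ) * ((X j t - X p t) ^ 3)⁻¹) (X j t) := by
    refine HasDerivAt.const_mul 48 ?_
    refine HasDerivAt.fun_sum (fun p hp => ?_)
    have hp' : p ≠ j := (mem_erase.1 hp).1
    have h1 := hasDerivAt_inv_pow_aux (X p t) (X j t) (hjp p hp') 2 one_le_two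
    refine h1.congr_deriv ?_
    norm_num
  have hT4 : HasDerivAt (fun x : ℂ => 48 * ∑ p ∈ univ.erase j,
      ∑ k ∈ (univ.erase j).erase p,
        (x - X j t) ^ 3 * (((x - X p t) ^ 2)⁻¹ * ((x - X k t) ^ 3)⁻¹)) (48 * 0) (X j t) := by
    refine HasDerivAt.const_mul 48 ?_
    have h := HasDerivAt.fun_sum (u := univ.erase j)
      (A := fun p x => ∑ k ∈ (univ.erase j).erase p,
        (x - X j t) ^ 3 * (((x - X p t) ^ 2)⁻¹ * ((x - X k t) ^ 3)⁻¹))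
      (A' := fun _ => 0) (fun p hp => by
        have hp' : p ≠ j := (mem_erase.1 hp).1
        have h := HasDerivAt.fun_sum (u := (univ.erase j).erase p)
          (A := fun k x => (x - X j t) ^ 3 * (((x - X p t) ^ 2)⁻¹ * ((x - X k t) ^ 3)⁻¹))
          (A' := fun _ => 0) (fun k hk => by
            have hk1 : k ≠ j := (mem_erase.1 (mem_of_mem_erase hk)).1
            have h1 := hasDerivAt_inv_pow_aux (X p t) (X j t) (hjp p hp') 2 one_le_two
            have h2 := hasDerivAt_inv_pow_aux (X k t) (X j t) (hjp k hk1) 3 (by norm_num)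
            have h3 := hcube.mul (h1.mul h2)
            refine h3.congr_deriv ?_
            simp)
        simpa using h)
    simpa using h
  have hC : HasDerivAt (fun _ : ℂ => 4 * deriv (X j) t) 0 (X j t) := hasDerivAt_const _ _
  have hD : HasDerivAt G
      (0 + 0 + (48 * ∑ k ∈ univ.erase j, ((X j t - X k t) ^ 3)⁻¹)
        + (48 * ∑ p ∈ univ.erase j, (-2 : ℂ) * ((X j t - X p t) ^ 3)⁻¹) + 48 * 0) (X j t) := by
    rw [hGdef]
    exact (((hC.add hT1).add hT2).add hT3).add hT4
  -- `G` vanishes on a punctured neighborhood of `X j t`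
  have hTopen : IsOpen {y : ℂ | ∀ p : Fin N, p ≠ j → y ≠ X p t} := by
    have e : {y : ℂ | ∀ p : Fin N, p ≠ j → y ≠ X p t}
        = ⋂ p : Fin N, {y : ℂ | p ≠ j → y ≠ X p t} := by
      ext y; simp [Set.mem_iInter]
    rw [e]
    refine isOpen_iInter_of_finite fun p => ?_
    by_cases hp : p = j
    · simp [hp]
    · simpa [hp] using (isOpen_ne : IsOpen {y : ℂ | y ≠ X p t})
  have hx0T : X j t ∈ {y : ℂ | ∀ p : Fin N, p ≠ j → y ≠ X p t} := fun p hp => hjp p hp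
  have hsubS : ∀ y ∈ {y : ℂ | ∀ p : Fin N, p ≠ j → y ≠ X p t}, y ≠ X j t → y ∈ S := by
    intro y hy hyj p
    by_cases hp : p = j
    · rw [hp]; exact hyj
    · exact hy p hp
  have hev0 : ∀ᶠ y in nhdsWithin (X j t) {X j t}ᶜ, G y = 0 := by
    filter_upwards [nhdsWithin_le_nhds (hTopen.mem_nhds hx0T), self_mem_nhdsWithin]
      with y hyT hyne
    exact hG0 y (hsubS y hyT hyne)
  have hGx0 : G (X j t) = 0 := by
    have h1 : Filter.Tendsto G (nhdsWithin (X j t) {X j t}ᶜ) (nhds (G (X j t))) :=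
      (hD.continuousAt.tendsto).mono_left nhdsWithin_le_nhds
    have h2 : Filter.Tendsto G (nhdsWithin (X j t) {X j t}ᶜ) (nhds 0) :=
      Filter.Tendsto.congr' (Filter.EventuallyEq.symm hev0) tendsto_const_nhds
    exact tendsto_nhds_unique h1 h2
  have hevn : G =ᶠ[nhds (X j t)] fun _ => 0 := by
    have : ∀ᶠ y in nhds (X j t), G y = 0 := by
      rw [← nhdsNE_sup_pure (X j t), Filter.eventually_sup]
      exact ⟨hev0, by simpa using hGx0⟩
    exact this
  have hderG : deriv G (X j t) = 0 := by
    rw [hevn.deriv_eq, deriv_const]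
  -- conclusion (1): the pole dynamics
  have hval : G (X j t) = 4 * deriv (X j) t
      + 48 * ∑ p ∈ univ.erase j, ((X j t - X p t) ^ 2)⁻¹ := by
    simp only [hGdef]
    simp
  have heq1 : 4 * deriv (X j) t
      + 48 * ∑ p ∈ univ.erase j, ((X j t - X p t) ^ 2)⁻¹ = 0 := hval.symm.trans hGx0
  -- conclusion (2): the locus constraint
  have heq2 : (0 : ℂ) = 0 + 0 + (48 * ∑ k ∈ univ.erase j, ((X j t - X k t) ^ 3)⁻¹)
      + (48 * ∑ p ∈ univ.erase j, (-2 : ℂ) * ((X j t - X p t) ^ 3)⁻¹) + 48 * 0 := by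
    rw [← hD.deriv, hderG]
  have hmulsum : (∑ p ∈ univ.erase j, (-2 : ℂ) * ((X j t - X p t) ^ 3)⁻¹)
      = -2 * ∑ p ∈ univ.erase j, ((X j t - X p t) ^ 3)⁻¹ := by
    rw [Finset.mul_sum]
  rw [hmulsum] at heq2
  constructor
  · linear_combination (1 / 4 : ℂ) * heq1
  · linear_combination (1 / 48 : ℂ) * heq2
end
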